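/- Nonnegativity of total gain at λ = 0 and consequent sign of the TreeInner score on training data: with λ = 0, every split gain Δ(t) = A_L²/n_L + A_R²/n_R − (A_L+A_R)²/(n_L+n_R) ≥ 0, hence TotalGain_{m,k} = Σ_{inner t: v(t)=k} Δ(t) ≥ 0, and therefore −Σ_{i=1}^N f_{m,k}(x_i)·G_i = α·TotalGain_{m,k} ≥ 0, i.e., the in-sample inner product between PreDecomp and the negative gradient is nonnegative for every feature. -/

import Mathlib

open MeasureTheory Set Finset Filter

/-- A finite full binary tree: every node carries a region `R ⊆ β` and a value `w : ℝ`;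
inner nodes additionally carry a split feature `v : ℕ`. -/
inductive BT (β : Type) where
  | leaf (R : Set β) (w : ℝ)
  | node (R : Set β) (w : ℝ) (v : ℕ) (l r : BT β)

namespace BT

variable {β ι : Type}

/-- The region associated with the root node of a (sub)tree. -/
def region : BT β → Set β
  | leaf R _ => R
  | node R _ _ _ _ => R

/-- The value assigned to the root node of a (sub)tree. -/
def val : BT β → ℝ
  | leaf _ w => w
  | node _ w _ _ _ => w

/-- Well-formedness: the children's regions partition the parent's region. -/
def WF : BT β → Prop
  | leaf _ _ => True
  | node R _ _ l r => l.region ∪ r.region = R ∧ Disjoint l.region r.region ∧ l.WF ∧ r.WF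

/-- Tree prediction: `f(X) = Σ_{leaves ℓ} p(ℓ) · 1[X ∈ R_ℓ]`. -/
noncomputable def pred : BT β → β → ℝ
  | leaf R w, X => R.indicator (fun _ => w) X
  | node _ _ _ l r, X => l.pred X + r.pred X

/-- Total attribution: sum over all inner nodes `t` of
`p(left t)·1[X∈R_left] + p(right t)·1[X∈R_right] − p(t)·1[X∈R_t]`. -/
noncomputable def attr : BT β → β → ℝ
  | leaf _ _, _ => 0
  | node R w _ l r, X =>
      (l.region.indicator (fun _ => l.val) X + r.region.indicator (fun _ => r.val) X
        - R.indicator (fun _ => w) X) + l.attr X + r.attr X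

/-- PreDecomp: per-feature attribution, summing only over inner nodes splitting on feature `k`. -/
noncomputable def attrF (k : ℕ) : BT β → β → ℝ
  | leaf _ _, _ => 0
  | node R w v l r, X =>
      (if v = k then
        l.region.indicator (fun _ => l.val) X + r.region.indicator (fun _ => r.val) X
          - R.indicator (fun _ => w) X
       else 0) + l.attrF k X + r.attrF k X

/-- All split features of inner nodes belong to `s`. -/
def FeatsIn (s : Finset ℕ) : BT β → Prop
  | leaf _ _ => True
  | node _ _ v l r => v ∈ s ∧ l.FeatsIn s ∧ r.FeatsIn s

/-- Every node's value equals `pv` of its region. -/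
def ValsEq (pv : Set β → ℝ) : BT β → Prop
  | leaf R w => w = pv R
  | node R w _ l r => w = pv R ∧ l.ValsEq pv ∧ r.ValsEq pv

/-- A predicate holds for every node's region. -/
def AllRegions (P : Set β → Prop) : BT β → Prop
  | leaf R _ => P R
  | node R _ _ l r => P R ∧ l.AllRegions P ∧ r.AllRegions P

/-- A predicate holds at every subtree (i.e. every node). -/
def AllSub (P : BT β → Prop) : BT β → Prop
  | leaf R w => P (leaf R w)
  | node R w v l r => P (node R w v l r) ∧ l.AllSub P ∧ r.AllSub P

end BT

/-- `Σ_{x_i ∈ R ∩ D} G_i`. -/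
noncomputable def gsum {β ι : Type} (D : Finset ι) (x : ι → β) (G : ι → ℝ) (R : Set β) : ℝ :=
  ∑ i ∈ D, R.indicator (fun _ => G i) (x i)

/-- `|R ∩ D|` as a real number. -/
noncomputable def cnt {β ι : Type} (D : Finset ι) (x : ι → β) (R : Set β) : ℝ :=
  ∑ i ∈ D, R.indicator (fun _ => (1 : ℝ)) (x i)

namespace BT

/-- Total gain of feature `k` in a tree: sum of split gains over inner nodes splitting on `k`. -/
noncomputable def totalGain {β ι : Type} (D : Finset ι) (x : ι → β) (G : ι → ℝ)
    (lam : ℝ) (k : ℕ) : BT β → ℝ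
  | leaf _ _ => 0
  | node R _ v l r =>
      (if v = k then
        (gsum D x G l.region) ^ 2 / (cnt D x l.region + lam)
        + (gsum D x G r.region) ^ 2 / (cnt D x r.region + lam)
        - (gsum D x G R) ^ 2 / (cnt D x R + lam)
       else 0)
      + totalGain D x G lam k l + totalGain D x G lam k r

end BT
lemma gain_nonneg_aux (AL AR nL nR : ℝ) (hL : 0 < nL) (hR : 0 < nR) :
    0 ≤ AL ^ 2 / nL + AR ^ 2 / nR - (AL + AR) ^ 2 / (nL + nR) := by
  have h : AL ^ 2 / nL + AR ^ 2 / nR - (AL + AR) ^ 2 / (nL + nR)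
      = (AL * nR - AR * nL) ^ 2 / (nL * nR * (nL + nR)) := by
    field_simp
    ring
  rw [h]
  positivity

lemma gsum_split {β ι : Type} (D : Finset ι) (x : ι → β) (G : ι → ℝ) {l r R : Set β}
    (hu : l ∪ r = R) (hd : Disjoint l r) :
    gsum D x G R = gsum D x G l + gsum D x G r := by
  unfold gsum
  rw [← Finset.sum_add_distrib]
  refine Finset.sum_congr rfl fun i _ => ?_
  rw [← hu, Set.indicator_union_of_disjoint hd]

lemma cnt_split {β ι : Type} (D : Finset ι) (x : ι → β) {l r R : Set β}
    (hu : l ∪ r = R) (hd : Disjoint l r) :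
    cnt D x R = cnt D x l + cnt D x r := by
  unfold cnt
  rw [← Finset.sum_add_distrib]
  refine Finset.sum_congr rfl fun i _ => ?_
  rw [← hu, Set.indicator_union_of_disjoint hd]

lemma sum_indicator_mul {β ι : Type} (D : Finset ι) (x : ι → β) (G : ι → ℝ)
    (R : Set β) (w : ℝ) :
    ∑ i ∈ D, R.indicator (fun _ => w) (x i) * G i = w * gsum D x G R := by
  unfold gsum
  rw [Finset.mul_sum]
  refine Finset.sum_congr rfl fun i _ => ?_
  by_cases h : x i ∈ R <;> simp [h]

lemma key_lemma {β ι : Type} (D : Finset ι) (x : ι → β) (G : ι → ℝ) (α : ℝ) (k : ℕ) :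
    ∀ t : BT β, t.WF → t.AllRegions (fun R => 0 < cnt D x R) →
      t.ValsEq (fun R => -α * gsum D x G R / cnt D x R) →
      (-(∑ i ∈ D, t.attrF k (x i) * G i) = α * t.totalGain D x G 0 k ∧
        0 ≤ t.totalGain D x G 0 k) := by
  intro t
  induction t with
  | leaf R w =>
      intro _ _ _
      simp [BT.attrF, BT.totalGain]
  | node R w v l r ihl ihr =>
      intro hWF hpos hvals
      obtain ⟨hu, hd, hWFl, hWFr⟩ := hWF
      obtain ⟨hpR, hposl, hposr⟩ := hpos
      obtain ⟨hw, hvl, hvr⟩ := hvals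
      obtain ⟨ihl1, ihl2⟩ := ihl hWFl hposl hvl
      obtain ⟨ihr1, ihr2⟩ := ihr hWFr hposr hvr
      have hgs : gsum D x G R = gsum D x G l.region + gsum D x G r.region :=
        gsum_split D x G hu hd
      have hcn : cnt D x R = cnt D x l.region + cnt D x r.region :=
        cnt_split D x hu hd
      have hpl : 0 < cnt D x l.region := by
        cases l with
        | leaf R w => exact hposl
        | node R w v a b => exact hposl.1
      have hpr : 0 < cnt D x r.region := by
        cases r with
        | leaf R w => exact hposr
        | node R w v a b => exact hposr.1
      have hgain : 0 ≤ (gsum D x G l.region) ^ 2 / (cnt D x l.region + 0)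
          + (gsum D x G r.region) ^ 2 / (cnt D x r.region + 0)
          - (gsum D x G R) ^ 2 / (cnt D x R + 0) := by
        rw [hgs, hcn]
        simpa using gain_nonneg_aux (gsum D x G l.region) (gsum D x G r.region)
          (cnt D x l.region) (cnt D x r.region) hpl hpr
      have hvall : l.val = -α * gsum D x G l.region / cnt D x l.region := by
        cases l with
        | leaf R w => exact hvl
        | node R w v a b => exact hvl.1
      have hvalr : r.val = -α * gsum D x G r.region / cnt D x r.region := by
        cases r with
        | leaf R w => exact hvr
        | node R w v a b => exact hvr.1
      constructor
      · show -(∑ i ∈ D,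
            ((if v = k then
              l.region.indicator (fun _ => l.val) (x i)
                + r.region.indicator (fun _ => r.val) (x i)
                - R.indicator (fun _ => w) (x i)
             else 0) + l.attrF k (x i) + r.attrF k (x i)) * G i) = _
        have hsplit : ∑ i ∈ D,
            ((if v = k then
              l.region.indicator (fun _ => l.val) (x i)
                + r.region.indicator (fun _ => r.val) (x i)
                - R.indicator (fun _ => w) (x i)
             else 0) + l.attrF k (x i) + r.attrF k (x i)) * G i
            = (∑ i ∈ D, (if v = k then
                l.region.indicator (fun _ => l.val) (x i)
                  + r.region.indicator (fun _ => r.val) (x i)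
                  - R.indicator (fun _ => w) (x i)
               else 0) * G i)
              + (∑ i ∈ D, l.attrF k (x i) * G i)
              + (∑ i ∈ D, r.attrF k (x i) * G i) := by
          rw [← Finset.sum_add_distrib, ← Finset.sum_add_distrib]
          refine Finset.sum_congr rfl fun i _ => by ring
        rw [hsplit]
        show _ = α * ((if v = k then
            (gsum D x G l.region) ^ 2 / (cnt D x l.region + 0)
              + (gsum D x G r.region) ^ 2 / (cnt D x r.region + 0)
              - (gsum D x G R) ^ 2 / (cnt D x R + 0)
           else 0) + l.totalGain D x G 0 k + r.totalGain D x G 0 k)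
        by_cases hv : v = k
        · simp only [hv, if_true]
          have hterm : ∑ i ∈ D, (l.region.indicator (fun _ => l.val) (x i)
                + r.region.indicator (fun _ => r.val) (x i)
                - R.indicator (fun _ => w) (x i)) * G i
              = l.val * gsum D x G l.region + r.val * gsum D x G r.region
                - w * gsum D x G R := by
            have : ∀ i ∈ D, (l.region.indicator (fun _ => l.val) (x i)
                + r.region.indicator (fun _ => r.val) (x i)
                - R.indicator (fun _ => w) (x i)) * G i
                = l.region.indicator (fun _ => l.val) (x i) * G i
                  + r.region.indicator (fun _ => r.val) (x i) * G i
                  - R.indicator (fun _ => w) (x i) * G i := fun i _ => by ring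
            rw [Finset.sum_congr rfl this, Finset.sum_sub_distrib,
              Finset.sum_add_distrib, sum_indicator_mul, sum_indicator_mul,
              sum_indicator_mul]
          rw [hterm, hvall, hvalr, hw]
          have e1 : -α * gsum D x G l.region / cnt D x l.region * gsum D x G l.region
              = -(α * ((gsum D x G l.region) ^ 2 / (cnt D x l.region + 0))) := by
            rw [add_zero]; field_simp [hpl.ne']
          have e2 : -α * gsum D x G r.region / cnt D x r.region * gsum D x G r.region
              = -(α * ((gsum D x G r.region) ^ 2 / (cnt D x r.region + 0))) := by
            rw [add_zero]; field_simp [hpr.ne']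
          have e3 : -α * gsum D x G R / cnt D x R * gsum D x G R
              = -(α * ((gsum D x G R) ^ 2 / (cnt D x R + 0))) := by
            rw [add_zero]; field_simp [hpR.ne']
          rw [e1, e2, e3]
          linarith [ihl1, ihr1]
        · simp only [hv, if_false]
          simp only [Finset.sum_congr rfl (fun i (_ : i ∈ D) => zero_mul (G i)),
            Finset.sum_const_zero]
          linarith [ihl1, ihr1]
      · show 0 ≤ (if v = k then
            (gsum D x G l.region) ^ 2 / (cnt D x l.region + 0)
              + (gsum D x G r.region) ^ 2 / (cnt D x r.region + 0)
              - (gsum D x G R) ^ 2 / (cnt D x R + 0)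
           else 0) + l.totalGain D x G 0 k + r.totalGain D x G 0 k
        by_cases hv : v = k
        · simp only [hv, if_true]; linarith
        · simp only [hv, if_false]; linarith

/-- with `λ = 0`, every split gain is nonnegative, hence the total gain of
each feature is nonnegative, and the in-sample inner product between PreDecomp and the
negative gradient, which equals `α · TotalGain_{m,k}`, is nonnegative. -/
theorem stmt_14 {β ι : Type} (D : Finset ι) (x : ι → β) (G : ι → ℝ)
    (α : ℝ) (hα : 0 < α) (t : BT β) (hWF : t.WF)
    (hpos : t.AllRegions (fun R => 0 < cnt D x R))
    (hvals : t.ValsEq (fun R => -α * gsum D x G R / cnt D x R)) (k : ℕ) :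
    (∀ AL AR nL nR : ℝ, 0 < nL → 0 < nR →
        0 ≤ AL ^ 2 / nL + AR ^ 2 / nR - (AL + AR) ^ 2 / (nL + nR)) ∧
    0 ≤ t.totalGain D x G 0 k ∧
    -(∑ i ∈ D, t.attrF k (x i) * G i) = α * t.totalGain D x G 0 k ∧
    0 ≤ -(∑ i ∈ D, t.attrF k (x i) * G i) := by
  obtain ⟨h1, h2⟩ := key_lemma D x G α k t hWF hpos hvals
  exact ⟨fun AL AR nL nR hL hR => gain_nonneg_aux AL AR nL nR hL hR, h2, h1,
    h1 ▸ mul_nonneg hα.le h2⟩
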